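/- Let E be a real inner product space and let m, m' ∈ E be unit vectors (‖m‖ = ‖m'‖ = 1). Then for all real numbers 0 ≤ t ≤ s: ‖t•m − s•m'‖ ≤ t·‖m − m'‖ + (s − t) ≤ √2 · ‖t•m − s•m'‖. Hence on the cone over a subset of the unit sphere, the cone distance formula min(t,s)·dist(m,m') + |t − s| and the ambient Euclidean distance ‖t•m − s•m'‖ are Lipschitz equivalent with constant √2. -/

import Mathlib

/-- For unit vectors `m, m'` in a real inner product space and
`0 ≤ t ≤ s`, the cone distance `t·‖m − m'‖ + (s − t)` and the ambient distance
`‖t•m − s•m'‖` are Lipschitz equivalent with constant `√2`. -/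
theorem cone_dist_lipschitz_equiv_euclidean
    {E : Type*} [NormedAddCommGroup E] [InnerProductSpace ℝ E]
    (m m' : E) (hm : ‖m‖ = 1) (hm' : ‖m'‖ = 1)
    (t s : ℝ) (ht : 0 ≤ t) (hts : t ≤ s) :
    ‖t • m - s • m'‖ ≤ t * ‖m - m'‖ + (s - t) ∧
    t * ‖m - m'‖ + (s - t) ≤ Real.sqrt 2 * ‖t • m - s • m'‖ := by
  set c : ℝ := inner ℝ m m' with hc
  have hc1 : c ≤ 1 := by
    have := real_inner_le_norm m m'
    rw [hm, hm'] at this; simpa using this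
  have hN2 : ‖t • m - s • m'‖ ^ 2 = t ^ 2 + s ^ 2 - 2 * t * s * c := by
    rw [norm_sub_sq_real]
    rw [norm_smul, norm_smul, real_inner_smul_left, real_inner_smul_right,
      hm, hm', Real.norm_eq_abs, Real.norm_eq_abs, abs_of_nonneg ht,
      abs_of_nonneg (ht.trans hts)]
    ring
  have hd2 : ‖m - m'‖ ^ 2 = 2 - 2 * c := by
    rw [norm_sub_sq_real, hm, hm']; ring
  have hdnn : 0 ≤ ‖m - m'‖ := norm_nonneg _
  have hNnn : 0 ≤ ‖t • m - s • m'‖ := norm_nonneg _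
  constructor
  · have heq : t • m - s • m' = t • (m - m') - (s - t) • m' := by
      rw [smul_sub, sub_smul]; abel
    calc ‖t • m - s • m'‖ ≤ ‖t • (m - m')‖ + ‖(s - t) • m'‖ := by
          rw [heq]; exact norm_sub_le _ _
      _ = t * ‖m - m'‖ + (s - t) := by
          rw [norm_smul, norm_smul, hm', Real.norm_eq_abs, Real.norm_eq_abs,
            abs_of_nonneg ht, abs_of_nonneg (by linarith : (0:ℝ) ≤ s - t)]
          ring
  · have hA : 0 ≤ t * ‖m - m'‖ + (s - t) := by nlinarith [mul_nonneg ht hdnn]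
    have hsq : (t * ‖m - m'‖ + (s - t)) ^ 2 ≤ 2 * ‖t • m - s • m'‖ ^ 2 := by
      nlinarith [sq_nonneg (t * ‖m - m'‖ - (s - t)), mul_nonneg (mul_nonneg ht (by linarith : (0:ℝ) ≤ s - t)) (by linarith : (0:ℝ) ≤ 1 - c)]
    calc t * ‖m - m'‖ + (s - t) = Real.sqrt ((t * ‖m - m'‖ + (s - t)) ^ 2) :=
          (Real.sqrt_sq hA).symm
      _ ≤ Real.sqrt (2 * ‖t • m - s • m'‖ ^ 2) := Real.sqrt_le_sqrt hsq
      _ = Real.sqrt 2 * ‖t • m - s • m'‖ := by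
          rw [Real.sqrt_mul (by norm_num), Real.sqrt_sq hNnn]
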